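/- There exists a cancellative semigroup that does not embed into any group. -/
import Mathlib

namespace Malcev

inductive L where
  | A | B | C | D | U | V | X | Y
deriving DecidableEq

open L

def fx : L → List L → List L
  | A, X :: t => B :: Y :: t
  | A, U :: t => B :: V :: t
  | C, X :: t => D :: Y :: t
  | h, t => h :: t

def nf : List L → List L
  | [] => []
  | h :: t => fx h (nf t)

lemma fx_spec (h : L) (P : List L) :
    fx h P = h :: P ∨
    (∃ r, (h = A ∧ P = X :: r ∧ fx h P = B :: Y :: r) ∨
          (h = A ∧ P = U :: r ∧ fx h P = B :: V :: r) ∨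
          (h = C ∧ P = X :: r ∧ fx h P = D :: Y :: r)) := by
  unfold fx; split <;> simp

lemma fx_ne (h : L) (hA : h ≠ A) (hC : h ≠ C) (s : List L) : fx h s = h :: s := by
  unfold fx; split <;> simp_all

lemma fx_len (h : L) (s : List L) : (fx h s).length = s.length + 1 := by
  rcases fx_spec h s with h1 | ⟨r, h1 | h1 | h1⟩ <;> simp_all [fx]

lemma nf_len (w : List L) : (nf w).length = w.length := by
  induction w with
  | nil => rfl
  | cons h t ih => simp [nf, fx_len, ih]

lemma fx_X (s : List L) : fx X s = X :: s := fx_ne X (by decide) (by decide) s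
lemma fx_Y (s : List L) : fx Y s = Y :: s := fx_ne Y (by decide) (by decide) s
lemma fx_U (s : List L) : fx U s = U :: s := fx_ne U (by decide) (by decide) s
lemma fx_V (s : List L) : fx V s = V :: s := fx_ne V (by decide) (by decide) s
lemma fx_B (s : List L) : fx B s = B :: s := fx_ne B (by decide) (by decide) s
lemma fx_D (s : List L) : fx D s = D :: s := fx_ne D (by decide) (by decide) s

lemma fx_append (h : L) (z t : List L) :
    nf (fx h z ++ t) = fx h (nf (z ++ t)) := by
  rcases fx_spec h z with h1 | ⟨r, ⟨hh, hz, h1⟩ | ⟨hh, hz, h1⟩ | ⟨hh, hz, h1⟩⟩ <;>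
    subst_vars <;> rw [h1] <;>
    simp only [List.cons_append, nf, fx_X, fx_Y, fx_U, fx_V, fx_B, fx_D] <;> rfl

lemma nf_append (w t : List L) : nf (w ++ t) = nf (nf w ++ t) := by
  induction w with
  | nil => rfl
  | cons h w ih =>
      rw [List.cons_append]
      show fx h (nf (w ++ t)) = nf (fx h (nf w) ++ t)
      rw [fx_append, ← ih]

lemma nf_idem (w : List L) : nf (nf w) = nf w := by
  have := nf_append w []
  simpa using this.symm

lemma nf_append_right (w t : List L) : nf (w ++ t) = nf (w ++ nf t) := by
  induction w with
  | nil => simp [nf_idem]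
  | cons h w ih =>
      simp only [List.cons_append, nf]
      exact congrArg _ ih

lemma norm_cons (h : L) (t : List L) (H : nf (h :: t) = h :: t) :
    nf t = t ∧ fx h t = h :: t := by
  have H' : fx h (nf t) = h :: t := H
  rcases fx_spec h (nf t) with h1 | ⟨r, ⟨hh, hz, h1⟩ | ⟨hh, hz, h1⟩ | ⟨hh, hz, h1⟩⟩ <;>
    rw [h1] at H'
  · have ht : nf t = t := by simpa using H'
    refine ⟨ht, ?_⟩
    rw [← ht]; rw [← ht] at H'; exact h1.trans (by rw [ht])
  all_goals (subst hh; simp at H')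

lemma fx_inj (h : L) (s s' : List L) (E : fx h s = fx h s') : s = s' := by
  rcases fx_spec h s with h1 | ⟨r, ⟨hh, hz, h1⟩ | ⟨hh, hz, h1⟩ | ⟨hh, hz, h1⟩⟩ <;>
  rcases fx_spec h s' with h2 | ⟨r', ⟨hh', hz', h2⟩ | ⟨hh', hz', h2⟩ | ⟨hh', hz', h2⟩⟩ <;>
    rw [h1, h2] at E <;> subst_vars <;> simp_all

lemma lcancel (t w w' : List L) (E : nf (t ++ w) = nf (t ++ w')) :
    nf w = nf w' := by
  induction t with
  | nil => simpa using E
  | cons h t ih =>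
      apply ih
      exact fx_inj h _ _ E

lemma fx_nil (h : L) : fx h [] = [h] := by
  cases h <;> rfl

lemma collide (p q q2 : L) (t t' : List L) (g : L) (r : List L)
    (hred : ∀ s, fx p (q :: s) ≠ p :: q :: s)
    (hqB : q ≠ B) (hqD : q ≠ D) (hqq : q ≠ q2)
    (hz : nf (p :: t) = p :: t)
    (h1 : nf (t ++ [g]) = q :: r)
    (h2 : nf (t' ++ [g]) = q2 :: r) : False := by
  cases t with
  | nil =>
      have hg : [g] = q :: r := by
        have h1' : nf [g] = q :: r := h1
        rwa [show nf [g] = [g] from fx_nil g] at h1'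
      obtain ⟨hgq, hr⟩ : g = q ∧ r = [] := by simpa using hg
      subst hgq; subst hr
      have hlen : t'.length + 1 = 1 := by
        have := congrArg List.length h2
        simpa [nf_len] using this
      have ht' : t' = [] := by cases t' <;> simp_all
      subst ht'
      have hnfg : nf ([] ++ [g]) = [g] := fx_nil g
      rw [hnfg] at h2
      exact hqq (by simpa using h2)
  | cons k s =>
      have h1' : fx k (nf (s ++ [g])) = q :: r := h1
      rcases fx_spec k (nf (s ++ [g])) with hk | ⟨r0, ⟨hh, hz0, hk⟩ | ⟨hh, hz0, hk⟩ | ⟨hh, hz0, hk⟩⟩ <;>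
        rw [hk] at h1'
      · obtain ⟨hkq, -⟩ : k = q ∧ nf (s ++ [g]) = r := by simpa using h1'
        subst hkq
        exact hred s (norm_cons p _ hz).2
      all_goals {
        obtain ⟨hbq, -⟩ := List.cons.injEq .. ▸ h1'
        subst hh
        first | exact hqB hbq.symm | exact hqD hbq.symm }
lemma hredAX : ∀ s, fx A (X :: s) ≠ A :: X :: s := by intro s; simp [fx]
lemma hredAU : ∀ s, fx A (U :: s) ≠ A :: U :: s := by intro s; simp [fx]
lemma hredCX : ∀ s, fx C (X :: s) ≠ C :: X :: s := by intro s; simp [fx]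

lemma rc1 (g : L) : ∀ (z z' : List L), nf z = z → nf z' = z' →
    nf (z ++ [g]) = nf (z' ++ [g]) → z = z' := by
  intro z
  induction z with
  | nil =>
      intro z' _ _ E
      have := congrArg List.length E
      simp [nf_len] at this
      cases z' <;> simp_all
  | cons h t ih =>
      intro z' hz hz' E
      cases z' with
      | nil =>
          have := congrArg List.length E
          simp [nf_len] at this
      | cons h' t' =>
          have E' : fx h (nf (t ++ [g])) = fx h' (nf (t' ++ [g])) := E
          rcases fx_spec h (nf (t ++ [g])) with hk | ⟨r0, ⟨hh, hz0, hk⟩ | ⟨hh, hz0, hk⟩ | ⟨hh, hz0, hk⟩⟩ <;>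
          rcases fx_spec h' (nf (t' ++ [g])) with hk' | ⟨r1, ⟨hh', hz1, hk'⟩ | ⟨hh', hz1, hk'⟩ | ⟨hh', hz1, hk'⟩⟩ <;>
            rw [hk, hk'] at E'
          -- (1,1)
          · obtain ⟨rfl, hPP⟩ : h = h' ∧ nf (t ++ [g]) = nf (t' ++ [g]) := by
              simpa using E'
            rw [ih t' (norm_cons _ _ hz).1 (norm_cons _ _ hz').1 hPP]
          -- (1,2): z' side redex A X
          · subst hh'
            obtain ⟨-, hP⟩ : h = B ∧ nf (t ++ [g]) = Y :: r1 := by simpa using E'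
            exact absurd (collide A X Y t' t g r1 hredAX (by decide) (by decide)
              (by decide) hz' hz1 hP) (by simp)
          -- (1,3): z' side redex A U
          · subst hh'
            obtain ⟨-, hP⟩ : h = B ∧ nf (t ++ [g]) = V :: r1 := by simpa using E'
            exact absurd (collide A U V t' t g r1 hredAU (by decide) (by decide)
              (by decide) hz' hz1 hP) (by simp)
          -- (1,4): z' side redex C X
          · subst hh'
            obtain ⟨-, hP⟩ : h = D ∧ nf (t ++ [g]) = Y :: r1 := by simpa using E'
            exact absurd (collide C X Y t' t g r1 hredCX (by decide) (by decide)
              (by decide) hz' hz1 hP) (by simp)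
          -- (2,1): z side redex A X
          · subst hh
            obtain ⟨-, hP⟩ : B = h' ∧ Y :: r0 = nf (t' ++ [g]) := by simpa using E'
            exact absurd (collide A X Y t t' g r0 hredAX (by decide) (by decide)
              (by decide) hz hz0 hP.symm) (by simp)
          -- (2,2)
          · subst hh; subst hh'
            obtain ⟨rfl⟩ : r0 = r1 := by simpa using E'
            rw [ih t' (norm_cons _ _ hz).1 (norm_cons _ _ hz').1 (hz0.trans hz1.symm)]
          · simp at E'
          · simp at E'
          -- (3,1): z side redex A U
          · subst hh
            obtain ⟨-, hP⟩ : B = h' ∧ V :: r0 = nf (t' ++ [g]) := by simpa using E'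
            exact absurd (collide A U V t t' g r0 hredAU (by decide) (by decide)
              (by decide) hz hz0 hP.symm) (by simp)
          · simp at E'
          -- (3,3)
          · subst hh; subst hh'
            obtain ⟨rfl⟩ : r0 = r1 := by simpa using E'
            rw [ih t' (norm_cons _ _ hz).1 (norm_cons _ _ hz').1 (hz0.trans hz1.symm)]
          · simp at E'
          -- (4,1): z side redex C X
          · subst hh
            obtain ⟨-, hP⟩ : D = h' ∧ Y :: r0 = nf (t' ++ [g]) := by simpa using E'
            exact absurd (collide C X Y t t' g r0 hredCX (by decide) (by decide)
              (by decide) hz hz0 hP.symm) (by simp)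
          · simp at E'
          · simp at E'
          -- (4,4)
          · subst hh; subst hh'
            obtain ⟨rfl⟩ : r0 = r1 := by simpa using E'
            rw [ih t' (norm_cons _ _ hz).1 (norm_cons _ _ hz').1 (hz0.trans hz1.symm)]

lemma rcancel (t w w' : List L) (E : nf (w ++ t) = nf (w' ++ t)) :
    nf w = nf w' := by
  induction t using List.reverseRecOn generalizing w w' with
  | nil => simpa using E
  | append_singleton ts g ih =>
      apply ih
      have E' : nf ((w ++ ts) ++ [g]) = nf ((w' ++ ts) ++ [g]) := by
        simpa [List.append_assoc] using E
      rw [nf_append (w ++ ts), nf_append (w' ++ ts)] at E'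
      exact rc1 g _ _ (nf_idem _) (nf_idem _) E'

instance setoid : Setoid (List L) where
  r w w' := nf w = nf w'
  iseqv := ⟨fun _ => rfl, Eq.symm, Eq.trans⟩

lemma rel_def (w w' : List L) : w ≈ w' ↔ nf w = nf w' := Iff.rfl

abbrev S : Type := Quotient Malcev.setoid

instance semigroup : Semigroup S where
  mul := Quotient.map₂ (· ++ ·) (by
    intro w w₂ h1 w' w₂' h2
    rw [rel_def] at *
    rw [nf_append, nf_append_right, h1, h2, ← nf_append_right, ← nf_append])
  mul_assoc a b c := by
    refine Quotient.inductionOn₃ a b c (fun x y z => ?_)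
    exact Quotient.sound (show nf ((x ++ y) ++ z) = nf (x ++ (y ++ z)) by rw [List.append_assoc])

lemma mul_mk (w w' : List L) :
    (Quotient.mk setoid w : S) * (Quotient.mk setoid w' : S) = Quotient.mk setoid (w ++ w') := rfl

lemma S_left_cancel : ∀ a x y : S, a * x = a * y → x = y := by
  intro a x y
  refine Quotient.inductionOn₃ a x y (fun a x y h => ?_)
  rw [mul_mk, mul_mk] at h
  exact Quotient.sound (lcancel a x y (Quotient.exact h))

lemma S_right_cancel : ∀ a x y : S, x * a = y * a → x = y := by
  intro a x y
  refine Quotient.inductionOn₃ a x y (fun a x y h => ?_)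
  rw [mul_mk, mul_mk] at h
  exact Quotient.sound (rcancel a x y (Quotient.exact h))

def gA : S := Quotient.mk setoid [A]
def gB : S := Quotient.mk setoid [B]
def gC : S := Quotient.mk setoid [C]
def gD : S := Quotient.mk setoid [D]
def gU : S := Quotient.mk setoid [U]
def gV : S := Quotient.mk setoid [V]
def gX : S := Quotient.mk setoid [X]
def gY : S := Quotient.mk setoid [Y]

lemma rel1 : gA * gX = gB * gY := Quotient.sound (by rw [rel_def]; decide)
lemma rel2 : gC * gX = gD * gY := Quotient.sound (by rw [rel_def]; decide)
lemma rel3 : gA * gU = gB * gV := Quotient.sound (by rw [rel_def]; decide)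
lemma rel4 : gC * gU ≠ gD * gV := by
  intro h
  have := Quotient.exact ((mul_mk [C] [U]).symm.trans (h.trans (mul_mk [D] [V])))
  rw [rel_def] at this
  exact absurd this (by decide)

end Malcev

/-- There exists a cancellative semigroup that does not embed into any group. -/
theorem stmt_1 :
    ∃ (S : Type) (_ : Semigroup S),
      (∀ a x y : S, a * x = a * y → x = y) ∧
      (∀ a x y : S, x * a = y * a → x = y) ∧
      ¬ ∃ (G : Type) (_ : Group G) (f : S → G),
          Function.Injective f ∧ ∀ x y : S, f (x * y) = f x * f y := by
  refine ⟨Malcev.S, Malcev.semigroup, Malcev.S_left_cancel, Malcev.S_right_cancel, ?_⟩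
  rintro ⟨G, _, f, hinj, hmul⟩
  open Malcev in
  have e1 : f gA * f gX = f gB * f gY := by rw [← hmul, ← hmul, rel1]
  have e2 : f gC * f gX = f gD * f gY := by rw [← hmul, ← hmul, rel2]
  have e3 : f gA * f gU = f gB * f gV := by rw [← hmul, ← hmul, rel3]
  have k : f gC * (f gA)⁻¹ = f gD * (f gB)⁻¹ := by
    have h : f gC * f gX * (f gA * f gX)⁻¹ = f gD * f gY * (f gB * f gY)⁻¹ := by
      rw [e2, e1]
    simpa [mul_inv_rev, mul_assoc] using h
  have key : f gC * f gU = f gD * f gV := by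
    calc f gC * f gU = f gC * (f gA)⁻¹ * (f gA * f gU) := by
          simp [mul_assoc]
      _ = f gD * (f gB)⁻¹ * (f gB * f gV) := by rw [k, e3]
      _ = f gD * f gV := by simp [mul_assoc]
  have : gC * gU = gD * gV := hinj (by rw [hmul, hmul, key])
  exact Malcev.rel4 this
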